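/- Let E(t,r) denote the group of invertible elements of the monoid G(t,r), i.e., the triples (x,y,z) with x a unit of ℤ/2^{t+1}. The map φ : E(t,r) → (ℤ/2^{t+1})ˣ × (ℤ/2^{r+1})ˣ defined by φ(x,y,z) = (x, π(x) + μ(z)) is a surjective group homomorphism, and its kernel equals {(1,y,0) : y ∈ ℤ/2^{r+1}}, which is a cyclic subgroup of order 2^{r+1} generated by the element (1,1,0). -/

import Mathlib

section ChangAux

lemma chang_key (r x : ℕ) :
    ((2 * (x % 2 ^ r) : ℕ) : ZMod (2 ^ (r + 1))) = ((2 * x : ℕ) : ZMod (2 ^ (r + 1))) := by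
  have h : 2 * x = 2 ^ (r + 1) * (x / 2 ^ r) + 2 * (x % 2 ^ r) := by
    conv_lhs => rw [← Nat.div_add_mod x (2 ^ r)]
    rw [pow_succ]; ring
  rw [h, Nat.cast_add, Nat.cast_mul (2 ^ (r + 1)), ZMod.natCast_self, zero_mul, zero_add]

lemma chang_two_cast {r : ℕ} (z : ZMod (2 ^ r)) :
    (2 : ZMod (2 ^ (r + 1))) * (ZMod.cast z : ZMod (2 ^ (r + 1)))
      = ((2 * z.val : ℕ) : ZMod (2 ^ (r + 1))) := by
  haveI : NeZero (2 ^ r) := ⟨pow_ne_zero _ two_ne_zero⟩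
  rw [← ZMod.natCast_val z]; push_cast; ring

lemma chang_two_cast_add {r : ℕ} (u v : ZMod (2 ^ r)) :
    (2 : ZMod (2 ^ (r + 1))) * (ZMod.cast (u + v) : ZMod (2 ^ (r + 1)))
      = 2 * (ZMod.cast u : ZMod (2 ^ (r + 1))) + 2 * (ZMod.cast v : ZMod (2 ^ (r + 1))) := by
  haveI : NeZero (2 ^ r) := ⟨pow_ne_zero _ two_ne_zero⟩
  rw [chang_two_cast, chang_two_cast, chang_two_cast, ZMod.val_add, chang_key]
  push_cast; ring

lemma chang_two_cast_mul {r : ℕ} (u v : ZMod (2 ^ r)) :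
    (2 : ZMod (2 ^ (r + 1))) * (ZMod.cast (u * v) : ZMod (2 ^ (r + 1)))
      = (2 * (ZMod.cast u : ZMod (2 ^ (r + 1)))) * (ZMod.cast v : ZMod (2 ^ (r + 1))) := by
  haveI : NeZero (2 ^ r) := ⟨pow_ne_zero _ two_ne_zero⟩
  rw [chang_two_cast, ZMod.val_mul, chang_key, chang_two_cast, ← ZMod.natCast_val v]
  push_cast; ring

lemma chang_two_cast_down {r : ℕ} (w : ZMod (2 ^ (r + 1))) :
    (2 : ZMod (2 ^ (r + 1))) * (ZMod.cast (ZMod.cast w : ZMod (2 ^ r)) : ZMod (2 ^ (r + 1)))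
      = 2 * w := by
  haveI : NeZero (2 ^ r) := ⟨pow_ne_zero _ two_ne_zero⟩
  haveI : NeZero (2 ^ (r + 1)) := ⟨pow_ne_zero _ two_ne_zero⟩
  rw [chang_two_cast]
  have hv : (ZMod.cast w : ZMod (2 ^ r)).val = w.val % 2 ^ r := by
    rw [← ZMod.natCast_val w, ZMod.val_natCast]
  rw [hv, chang_key]
  push_cast
  rw [ZMod.natCast_val, ZMod.cast_id]

/-- Casting down in two steps. -/
lemma chang_cast_cast {t r : ℕ} (htr : r ≤ t) (x : ZMod (2 ^ (t + 1))) :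
    (ZMod.cast x : ZMod (2 ^ r)) = (ZMod.cast (ZMod.cast x : ZMod (2 ^ (r + 1))) : ZMod (2 ^ r)) := by
  haveI : NeZero (2 ^ r) := ⟨pow_ne_zero _ two_ne_zero⟩
  haveI : NeZero (2 ^ (r + 1)) := ⟨pow_ne_zero _ two_ne_zero⟩
  haveI : NeZero (2 ^ (t + 1)) := ⟨pow_ne_zero _ two_ne_zero⟩
  conv_lhs => rw [← ZMod.natCast_val x]
  conv_rhs => rw [← ZMod.natCast_val x]
  rw [← ZMod.natCast_val (((x.val : ℕ) : ZMod (2 ^ (r + 1)))), ZMod.val_natCast,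
    ZMod.natCast_eq_natCast_iff]
  exact (Nat.mod_mod_of_dvd _ (pow_dvd_pow 2 (by omega))).symm

lemma chang_two_cast_pi {t r : ℕ} (h1 : (2 : ℕ) ^ r ∣ 2 ^ (t + 1))
    (h2 : (2 : ℕ) ^ (r + 1) ∣ 2 ^ (t + 1)) (htr : r ≤ t) (x : ZMod (2 ^ (t + 1))) :
    (2 : ZMod (2 ^ (r + 1))) * (ZMod.cast (ZMod.castHom h1 (ZMod (2 ^ r)) x) : ZMod (2 ^ (r + 1)))
      = 2 * ZMod.castHom h2 (ZMod (2 ^ (r + 1))) x := by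
  rw [ZMod.castHom_apply, ZMod.castHom_apply, chang_cast_cast htr, chang_two_cast_down]

lemma chang_odd_of_isUnit {k : ℕ} (hk : 1 ≤ k) (w : ZMod (2 ^ k)) (h : IsUnit w) :
    w.val % 2 = 1 := by
  haveI : NeZero (2 ^ k) := ⟨pow_ne_zero _ two_ne_zero⟩
  have hc : Nat.Coprime w.val (2 ^ k) := by
    rw [← ZMod.isUnit_iff_coprime, ZMod.natCast_zmod_val]; exact h
  by_contra h'
  have h2 : 2 ∣ w.val := by omega
  have hg : 2 ∣ Nat.gcd w.val (2 ^ k) := Nat.dvd_gcd h2 (dvd_pow_self 2 (by omega))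
  rw [hc] at hg
  omega

lemma chang_isUnit_of_odd {k : ℕ} (w : ZMod (2 ^ k)) (h : w.val % 2 = 1) : IsUnit w := by
  haveI : NeZero (2 ^ k) := ⟨pow_ne_zero _ two_ne_zero⟩
  have h2 : Nat.Coprime 2 w.val :=
    (Nat.Prime.coprime_iff_not_dvd Nat.prime_two).mpr (by omega)
  have hc : Nat.Coprime w.val (2 ^ k) := Nat.Coprime.pow_right _ (Nat.coprime_comm.mp h2)
  rw [← ZMod.natCast_zmod_val w]
  exact (ZMod.isUnit_iff_coprime _ _).mpr hc


lemma chang_exists_half {r : ℕ} (d : ZMod (2 ^ (r + 1))) (hd : d.val % 2 = 0) :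
    ∃ z : ZMod (2 ^ r), (2 : ZMod (2 ^ (r + 1))) * (ZMod.cast z : ZMod (2 ^ (r + 1))) = d := by
  haveI : NeZero (2 ^ r) := ⟨pow_ne_zero _ two_ne_zero⟩
  haveI : NeZero (2 ^ (r + 1)) := ⟨pow_ne_zero _ two_ne_zero⟩
  refine ⟨((d.val / 2 : ℕ) : ZMod (2 ^ r)), ?_⟩
  rw [chang_two_cast, ZMod.val_natCast, chang_key,
    show 2 * (d.val / 2) = d.val from by omega, ZMod.natCast_val, ZMod.cast_id]

lemma chang_even_sub {k : ℕ} (hk : 1 ≤ k) (v X : ZMod (2 ^ k)) (hv : v.val % 2 = 1)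
    (hX : X.val % 2 = 1) : (v - X).val % 2 = 0 := by
  haveI : NeZero (2 ^ k) := ⟨pow_ne_zero _ two_ne_zero⟩
  have hsum : ((v - X).val + X.val) % 2 ^ k = v.val := by rw [← ZMod.val_add, sub_add_cancel]
  have hmm := Nat.mod_mod_of_dvd ((v - X).val + X.val) (dvd_pow_self 2 (by omega : k ≠ 0))
  rw [hsum] at hmm
  omega

lemma chang_pi_odd {t r : ℕ} (h1 : (2 : ℕ) ^ r ∣ 2 ^ (t + 1)) (u : ZMod (2 ^ (t + 1)))
    (hu : u.val % 2 = 1) (hr : 1 ≤ r) : (ZMod.castHom h1 (ZMod (2 ^ r)) u).val % 2 = 1 := by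
  haveI : NeZero (2 ^ r) := ⟨pow_ne_zero _ two_ne_zero⟩
  haveI : NeZero (2 ^ (t + 1)) := ⟨pow_ne_zero _ two_ne_zero⟩
  rw [show ZMod.castHom h1 (ZMod (2 ^ r)) u = ((u.val : ℕ) : ZMod (2 ^ r)) from by
    rw [ZMod.castHom_apply, ← ZMod.natCast_val u], ZMod.val_natCast]
  have := Nat.mod_mod_of_dvd u.val (dvd_pow_self 2 (by omega : r ≠ 0))
  omega

lemma chang_odd_add_two_mul {r : ℕ} (hr : 1 ≤ r) (w z : ZMod (2 ^ r)) (hw : w.val % 2 = 1) :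
    IsUnit (w + 2 * z) := by
  haveI : NeZero (2 ^ r) := ⟨pow_ne_zero _ two_ne_zero⟩
  apply chang_isUnit_of_odd
  have hdvd : (2 : ℕ) ∣ 2 ^ r := dvd_pow_self 2 (by omega)
  rw [show w + 2 * z = w + (z + z) from by ring, ZMod.val_add, ZMod.val_add]
  have m1 := Nat.mod_mod_of_dvd (w.val + (z.val + z.val) % 2 ^ r) hdvd
  have m3 := Nat.mod_mod_of_dvd (z.val + z.val) hdvd
  omega

end ChangAux

/-- The composition law of `[C,C]` for the elementary Chang complex `C = C^{n+2,t}_r`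
with `t ≥ r`, in coordinates `ℤ/2^{t+1} × ℤ/2^{r+1} × ℤ/2^r`. -/
def changOp (t r : ℕ) (htr : r ≤ t)
    (a b : ZMod (2 ^ (t + 1)) × ZMod (2 ^ (r + 1)) × ZMod (2 ^ r)) :
    ZMod (2 ^ (t + 1)) × ZMod (2 ^ (r + 1)) × ZMod (2 ^ r) :=
  (a.1 * b.1,
   ZMod.castHom (pow_dvd_pow 2 (by omega : r + 1 ≤ t + 1)) (ZMod (2 ^ (r + 1))) a.1 * b.2.1
     + ZMod.castHom (pow_dvd_pow 2 (by omega : r + 1 ≤ t + 1)) (ZMod (2 ^ (r + 1))) b.1 * a.2.1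
     + a.2.1 * (2 * (ZMod.cast b.2.2 : ZMod (2 ^ (r + 1)))),
   ZMod.castHom (pow_dvd_pow 2 (by omega : r ≤ t + 1)) (ZMod (2 ^ r)) a.1 * b.2.2
     + ZMod.castHom (pow_dvd_pow 2 (by omega : r ≤ t + 1)) (ZMod (2 ^ r)) b.1 * a.2.2
     + 2 * a.2.2 * b.2.2)

/-- The set `E(t,r)` of invertible elements of the monoid `G(t,r)`. -/
def changE (t r : ℕ) (htr : r ≤ t) :
    Set (ZMod (2 ^ (t + 1)) × ZMod (2 ^ (r + 1)) × ZMod (2 ^ r)) :=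
  {a | ∃ b, changOp t r htr a b = (1, 0, 0) ∧ changOp t r htr b a = (1, 0, 0)}

/-- The map `φ(x,y,z) = (x, π(x) + μ(z))`. -/
def changPhi (t r : ℕ) (htr : r ≤ t)
    (a : ZMod (2 ^ (t + 1)) × ZMod (2 ^ (r + 1)) × ZMod (2 ^ r)) :
    ZMod (2 ^ (t + 1)) × ZMod (2 ^ (r + 1)) :=
  (a.1,
   ZMod.castHom (pow_dvd_pow 2 (by omega : r + 1 ≤ t + 1)) (ZMod (2 ^ (r + 1))) a.1
     + 2 * (ZMod.cast a.2.2 : ZMod (2 ^ (r + 1))))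

/-- For `t ≥ r ≥ 1`, the map `φ(x,y,z) = (x, π(x) + μ(z))` is a surjective group
homomorphism from `E(t,r)` onto `(ℤ/2^{t+1})ˣ × (ℤ/2^{r+1})ˣ`, and its kernel is
`{(1,y,0) : y ∈ ℤ/2^{r+1}}`, a cyclic subgroup of order `2^{r+1}` generated by
`(1,1,0)`. -/
theorem stmt5 (t r : ℕ) (hr : 1 ≤ r) (htr : r ≤ t) :
    -- φ is multiplicative on E(t,r)
    (∀ a ∈ changE t r htr, ∀ b ∈ changE t r htr,
      changPhi t r htr (changOp t r htr a b)
        = ((changPhi t r htr a).1 * (changPhi t r htr b).1,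
           (changPhi t r htr a).2 * (changPhi t r htr b).2)) ∧
    -- φ maps E(t,r) into the product of unit groups
    (∀ a ∈ changE t r htr, IsUnit (changPhi t r htr a).1 ∧ IsUnit (changPhi t r htr a).2) ∧
    -- φ is surjective onto the product of unit groups
    (∀ u : ZMod (2 ^ (t + 1)), ∀ v : ZMod (2 ^ (r + 1)), IsUnit u → IsUnit v →
      ∃ a ∈ changE t r htr, changPhi t r htr a = (u, v)) ∧
    -- the kernel of φ is exactly {(1, y, 0)}
    (∀ a ∈ changE t r htr,
      (changPhi t r htr a = (1, 1) ↔ ∃ y : ZMod (2 ^ (r + 1)), a = (1, y, 0))) ∧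
    (∀ y : ZMod (2 ^ (r + 1)), (1, y, 0) ∈ changE t r htr) ∧
    -- the kernel has order 2^{r+1}
    Nat.card {a : ZMod (2 ^ (t + 1)) × ZMod (2 ^ (r + 1)) × ZMod (2 ^ r) //
        a ∈ changE t r htr ∧ changPhi t r htr a = (1, 1)} = 2 ^ (r + 1) ∧
    -- the kernel is cyclic, generated by (1,1,0)
    (∀ a ∈ changE t r htr, changPhi t r htr a = (1, 1) →
      ∃ n : ℕ, a = (fun b => changOp t r htr (1, 1, 0) b)^[n] (1, 0, 0)) := by
  haveI : NeZero (2 ^ r) := ⟨pow_ne_zero _ two_ne_zero⟩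
  haveI : NeZero (2 ^ (r + 1)) := ⟨pow_ne_zero _ two_ne_zero⟩
  haveI : NeZero (2 ^ (t + 1)) := ⟨pow_ne_zero _ two_ne_zero⟩
  have hmul : ∀ a b : ZMod (2 ^ (t + 1)) × ZMod (2 ^ (r + 1)) × ZMod (2 ^ r),
      changPhi t r htr (changOp t r htr a b)
        = ((changPhi t r htr a).1 * (changPhi t r htr b).1,
           (changPhi t r htr a).2 * (changPhi t r htr b).2) := by
    intro a b
    simp only [changPhi, changOp, Prod.mk.injEq, map_mul]
    refine ⟨by trivial, ?_⟩
    rw [show (2 * a.2.2 * b.2.2 : ZMod (2 ^ r)) = (a.2.2 + a.2.2) * b.2.2 by ring]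
    rw [chang_two_cast_add, chang_two_cast_add, chang_two_cast_mul, chang_two_cast_mul,
      chang_two_cast_mul, chang_two_cast_add, chang_two_cast_pi _ (pow_dvd_pow 2 (by omega)) htr,
      chang_two_cast_pi _ (pow_dvd_pow 2 (by omega)) htr]
    ring
  have hker_phi : ∀ y : ZMod (2 ^ (r + 1)),
      changPhi t r htr (1, y, 0) = (1, 1) := by
    intro y
    simp only [changPhi, Prod.mk.injEq, map_one, ZMod.cast_zero]
    exact ⟨by trivial, by ring⟩
  have hmem1 : ∀ y : ZMod (2 ^ (r + 1)), (1, y, 0) ∈ changE t r htr := by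
    intro y
    refine ⟨(1, -y, 0), ?_, ?_⟩ <;>
    · simp only [changOp, Prod.mk.injEq, map_one, ZMod.cast_zero]
      exact ⟨by ring, by ring, by ring⟩
  have hker : ∀ a : ZMod (2 ^ (t + 1)) × ZMod (2 ^ (r + 1)) × ZMod (2 ^ r),
      changPhi t r htr a = (1, 1) → ∃ y, a = (1, y, 0) := by
    intro a h
    rw [changPhi, Prod.mk.injEq] at h
    obtain ⟨h1, h2⟩ := h
    rw [h1, map_one] at h2
    have h3 : (2 : ZMod (2 ^ (r + 1))) * (ZMod.cast a.2.2 : ZMod (2 ^ (r + 1))) = 0 := by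
      linear_combination h2
    rw [chang_two_cast] at h3
    have h4 : (2 ^ (r + 1) : ℕ) ∣ 2 * a.2.2.val :=
      (ZMod.natCast_eq_zero_iff _ _).mp h3
    obtain ⟨c, hc⟩ := h4
    have hc' : 2 * a.2.2.val = 2 * (2 ^ r * c) := by rw [hc, pow_succ]; ring
    have h6 := Nat.eq_of_mul_eq_mul_left two_pos hc'
    have h5 : a.2.2.val = 0 := Nat.eq_zero_of_dvd_of_lt ⟨c, h6⟩ (ZMod.val_lt a.2.2)
    have h7 : a.2.2 = 0 := by rwa [← ZMod.val_eq_zero]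
    exact ⟨a.2.1, by simp [Prod.ext_iff, h1, h7]⟩
  refine ⟨fun a _ b _ => hmul a b, ?_, ?_, ?_, hmem1, ?_, ?_⟩
  · -- units
    rintro a ⟨b, hab, hba⟩
    constructor
    · have h1 : a.1 * b.1 = 1 := congrArg Prod.fst hab
      exact IsUnit.of_mul_eq_one _ h1
    · have h := hmul a b
      rw [hab] at h
      have h2 : (1 : ZMod (2 ^ (r + 1)))
          = (changPhi t r htr a).2 * (changPhi t r htr b).2 := by
        have h3 := congrArg Prod.snd h
        simpa only [changPhi, map_one, ZMod.cast_zero, mul_zero, add_zero] using h3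
      exact IsUnit.of_mul_eq_one _ h2.symm
  · -- surjectivity
    intro u v hu hv
    have huodd : u.val % 2 = 1 := chang_odd_of_isUnit (by omega) u hu
    have hvodd : v.val % 2 = 1 := chang_odd_of_isUnit (by omega) v hv
    have hXu : IsUnit (ZMod.castHom (pow_dvd_pow 2 (by omega : r + 1 ≤ t + 1))
        (ZMod (2 ^ (r + 1))) u) := hu.map _
    have hXodd := chang_odd_of_isUnit (by omega) _ hXu
    obtain ⟨z, hz⟩ := chang_exists_half
      (v - ZMod.castHom (pow_dvd_pow 2 (by omega : r + 1 ≤ t + 1)) (ZMod (2 ^ (r + 1))) u)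
      (chang_even_sub (by omega) _ _ hvodd hXodd)
    obtain ⟨U, hU⟩ := hu
    have huui : u * (↑U⁻¹ : ZMod (2 ^ (t + 1))) = 1 := by rw [← hU]; exact U.mul_inv
    have huiu : (↑U⁻¹ : ZMod (2 ^ (t + 1))) * u = 1 := by rw [← hU]; exact U.inv_mul
    have hwu : IsUnit (ZMod.castHom (pow_dvd_pow 2 (by omega : r ≤ t + 1))
        (ZMod (2 ^ r)) u + 2 * z) :=
      chang_odd_add_two_mul hr _ z (chang_pi_odd _ u huodd hr)
    obtain ⟨W, hW⟩ := hwu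
    have hWwi : (ZMod.castHom (pow_dvd_pow 2 (by omega : r ≤ t + 1))
        (ZMod (2 ^ r)) u + 2 * z) * (↑W⁻¹ : ZMod (2 ^ r)) = 1 := by
      rw [← hW]; exact W.mul_inv
    refine ⟨(u, 0, z), ⟨((↑U⁻¹ : ZMod (2 ^ (t + 1))), 0,
      -(ZMod.castHom (pow_dvd_pow 2 (by omega : r ≤ t + 1)) (ZMod (2 ^ r))
          (↑U⁻¹ : ZMod (2 ^ (t + 1))) * z) * (↑W⁻¹ : ZMod (2 ^ r))), ?_, ?_⟩, ?_⟩
    · simp only [changOp, Prod.mk.injEq]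
      refine ⟨huui, by ring, ?_⟩
      linear_combination (-(ZMod.castHom (pow_dvd_pow 2 (by omega : r ≤ t + 1))
        (ZMod (2 ^ r)) (↑U⁻¹ : ZMod (2 ^ (t + 1))) * z)) * hWwi
    · simp only [changOp, Prod.mk.injEq]
      refine ⟨huiu, by ring, ?_⟩
      linear_combination (-(ZMod.castHom (pow_dvd_pow 2 (by omega : r ≤ t + 1))
        (ZMod (2 ^ r)) (↑U⁻¹ : ZMod (2 ^ (t + 1))) * z)) * hWwi
    · simp only [changPhi, Prod.mk.injEq]
      exact ⟨by trivial, by linear_combination hz⟩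
  · -- kernel characterization
    intro a _
    exact ⟨fun h => hker a h, fun ⟨y, hy⟩ => hy ▸ hker_phi y⟩
  · -- cardinality
    have e : {a : ZMod (2 ^ (t + 1)) × ZMod (2 ^ (r + 1)) × ZMod (2 ^ r) //
        a ∈ changE t r htr ∧ changPhi t r htr a = (1, 1)} ≃ ZMod (2 ^ (r + 1)) :=
      { toFun := fun a => a.1.2.1
        invFun := fun y => ⟨(1, y, 0), hmem1 y, hker_phi y⟩
        left_inv := by
          rintro ⟨a, hmem, hphi⟩
          obtain ⟨y, hy⟩ := hker a hphi
          apply Subtype.ext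
          show ((1 : ZMod (2 ^ (t + 1))), (a.2.1 : ZMod (2 ^ (r + 1))), (0 : ZMod (2 ^ r))) = a
          rw [hy]
        right_inv := fun y => rfl }
    rw [Nat.card_congr e, Nat.card_zmod]
  · -- cyclicity
    have hiter : ∀ n : ℕ, (fun b => changOp t r htr (1, 1, 0) b)^[n] (1, 0, 0)
        = (1, (n : ZMod (2 ^ (r + 1))), 0) := by
      intro n
      induction n with
      | zero => simp
      | succ n ih =>
        rw [Function.iterate_succ_apply', ih]
        simp only [changOp, Prod.mk.injEq, map_one, ZMod.cast_zero]
        refine ⟨by ring, ?_, by ring⟩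
        push_cast
        ring
    intro a _ hphi
    obtain ⟨y, hy⟩ := hker a hphi
    refine ⟨y.val, ?_⟩
    rw [hiter, hy, ZMod.natCast_val, ZMod.cast_id]
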